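/- Let c ≥ 1 and let A be a finite-dimensional commutative unital ℝ-algebra with a ℤ/cℤ-grading A = ⊕_{k ∈ ℤ/cℤ} A_k (so A_k·A_l ⊆ A_{k+l} and 1 ∈ A_0). Suppose there is an ℝ-linear form φ_0 : A_0 → ℝ with φ_0(1) = 1 such that the bilinear form Q_0(a,b) = φ_0(ab) on A_0 is positive definite. Then for every a ∈ A_1, the Jacobson radical R(A) is contained in the generalized 0-eigenspace of multiplication by a; that is, every x ∈ R(A) satisfies a^n · x = 0 for some n ≥ 0. -/

import Mathlib

set_option maxHeartbeats 1000000

open scoped TensorProduct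

lemma aux_nilpotent_component
    (c : ℕ) [NeZero c]
    (A : Type*) [CommRing A] [Algebra ℝ A]
    (Agr : ZMod c → Submodule ℝ A) [DirectSum.Decomposition Agr]
    (hgrmul : ∀ (k l : ZMod c) (x y : A), x ∈ Agr k → y ∈ Agr l → x * y ∈ Agr (k + l))
    {x : A} (hx : IsNilpotent x) (k : ZMod c) :
    IsNilpotent ((DirectSum.decompose Agr x k : A)) := by
  classical
  set B := ℂ ⊗[ℝ] A with hB
  set ι : A →ₐ[ℝ] B := Algebra.TensorProduct.includeRight with hιdef
  have hι : Function.Injective ι := by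
    have hf : Function.Injective (Algebra.linearMap ℝ ℂ) := fun a b h =>
      (algebraMap ℝ ℂ).injective h
    have h2 := Module.Flat.rTensor_preserves_injective_linearMap (M := A)
      (Algebra.linearMap ℝ ℂ) hf
    intro a b hab
    apply (TensorProduct.lid ℝ A).symm.injective
    apply h2
    simp only [TensorProduct.lid_symm_apply, LinearMap.rTensor_tmul, Algebra.linearMap_apply,
      map_one]
    exact hab
  -- the twisted maps
  set s : ℂ → A → B := fun ω y =>
    ∑ l : ZMod c, ω ^ (l.val) • (ι (DirectSum.decompose Agr y l : A)) with hsdef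
  have hs0 : ∀ ω, s ω 0 = 0 := by
    intro ω; simp [hsdef]
  have hshom : ∀ (ω : ℂ) (l : ZMod c) (u : A), u ∈ Agr l → s ω u = ω ^ l.val • ι u := by
    intro ω l u hu
    rw [hsdef]
    simp only
    rw [Finset.sum_eq_single l]
    · rw [DirectSum.decompose_of_mem_same Agr hu]
    · intro b _ hb
      rw [DirectSum.decompose_of_mem_ne Agr hu (Ne.symm hb)]
      simp
    · intro h; exact absurd (Finset.mem_univ l) h
  have hsadd : ∀ (ω : ℂ) (y z : A), s ω (y + z) = s ω y + s ω z := by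
    intro ω y z
    rw [hsdef]
    simp only [DirectSum.decompose_add, DirectSum.add_apply, Submodule.coe_add, map_add,
      smul_add]
    rw [Finset.sum_add_distrib]
  have hval : ∀ (ω : ℂ), ω ^ c = 1 → ∀ (i j : ZMod c),
      ω ^ (i + j).val = ω ^ i.val * ω ^ j.val := by
    intro ω hω i j
    have h1 : (i + j).val = (i.val + j.val) % c := ZMod.val_add i j
    have h2 : ω ^ ((i.val + j.val) % c) = ω ^ (i.val + j.val) := by
      conv_rhs => rw [← Nat.div_add_mod (i.val + j.val) c]
      rw [pow_add, pow_mul, hω, one_pow, one_mul]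
    rw [h1, h2, pow_add]
  have hsmul : ∀ (ω : ℂ), ω ^ c = 1 → ∀ (y z : A), s ω (y * z) = s ω y * s ω z := by
    intro ω hω
    refine fun y => DirectSum.Decomposition.inductionOn Agr
      (motive := fun y => ∀ z, s ω (y * z) = s ω y * s ω z) ?_ ?_ ?_ y
    · intro z; rw [zero_mul, hs0, zero_mul]
    · intro i m
      refine fun z => DirectSum.Decomposition.inductionOn Agr
        (motive := fun z => s ω ((m : A) * z) = s ω (m : A) * s ω z) ?_ ?_ ?_ z
      · show s ω ((m : A) * 0) = s ω (m : A) * s ω 0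
        rw [mul_zero, hs0, mul_zero]
      · intro j n
        show s ω ((m : A) * (n : A)) = s ω (m : A) * s ω (n : A)
        rw [hshom ω i m m.2, hshom ω j n n.2,
          hshom ω (i + j) _ (hgrmul i j _ _ m.2 n.2), hval ω hω i j, map_mul]
        rw [smul_mul_smul_comm]
      · intro z z' hz hz'
        show s ω ((m : A) * (z + z')) = s ω (m : A) * s ω (z + z')
        rw [mul_add, hsadd, hz, hz', hsadd, mul_add]
    · intro y y' hy hy' z
      rw [add_mul, hsadd, hy, hy', hsadd, add_mul]
  have hspow : ∀ (ω : ℂ), ω ^ c = 1 → ∀ (n : ℕ) (y : A), s ω (y ^ (n + 1)) = (s ω y) ^ (n + 1) := by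
    intro ω hω n y
    induction n with
    | zero => simp
    | succ n ih =>
      rw [pow_succ, hsmul ω hω, ih, ← pow_succ]
  -- primitive root of unity
  obtain ⟨N, hN⟩ := hx
  have hN' : x ^ (N + 1) = 0 := by rw [pow_succ, hN, zero_mul]
  set ζ : ℂ := Complex.exp (2 * Real.pi * Complex.I / c) with hζdef
  have hζ : IsPrimitiveRoot ζ c := Complex.isPrimitiveRoot_exp c (NeZero.ne c)
  have hζc : ζ ^ c = 1 := hζ.pow_eq_one
  have hωc : ∀ j : ℕ, (ζ ^ j) ^ c = 1 := by
    intro j; rw [← pow_mul, mul_comm, pow_mul, hζc, one_pow]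
  have hterm : ∀ j : ℕ, IsNilpotent (s (ζ ^ j) x) := by
    intro j
    exact ⟨N + 1, by rw [← hspow _ (hωc j) N x, hN', hs0]⟩
  set T : B := ∑ j ∈ Finset.range c, (ζ ^ j) ^ (c - k.val) • s (ζ ^ j) x with hTdef
  have hTnil : IsNilpotent T := by
    refine isNilpotent_sum (fun j _ => ?_)
    have := hterm j
    obtain ⟨m, hm⟩ := this
    exact ⟨m, by rw [smul_pow, hm, smul_zero]⟩
  have hkval : k.val < c := ZMod.val_lt k
  have hT : T = (c : ℂ) • ι (DirectSum.decompose Agr x k : A) := by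
    have step1 : T = ∑ l : ZMod c, (∑ j ∈ Finset.range c,
        ζ ^ (j * (c - k.val + l.val))) • ι (DirectSum.decompose Agr x l : A) := by
      rw [hTdef]
      simp only [hsdef, Finset.smul_sum]
      rw [Finset.sum_comm]
      refine Finset.sum_congr rfl (fun l _ => ?_)
      rw [Finset.sum_smul]
      refine Finset.sum_congr rfl (fun j _ => ?_)
      rw [smul_smul, ← pow_add, ← pow_mul]
    rw [step1, Finset.sum_eq_single k]
    · have h1 : c - k.val + k.val = c := Nat.sub_add_cancel hkval.le
      rw [h1]
      have h2 : ∀ j ∈ Finset.range c, ζ ^ (j * c) = 1 := by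
        intro j _; rw [mul_comm, pow_mul, hζc, one_pow]
      rw [Finset.sum_congr rfl h2, Finset.sum_const, Finset.card_range, nsmul_eq_mul, mul_one]
    · intro l _ hl
      have hlval : l.val < c := ZMod.val_lt l
      have hne : ¬ (c ∣ (c - k.val + l.val)) := by
        intro hdvd
        have h1 : c - k.val + l.val = c := by
          obtain ⟨d, hd⟩ := hdvd
          rcases d with _ | _ | d
          · omega
          · omega
          · have : c * (d + 1 + 1) = c * d + c + c := by ring
            omega
        have h2 : l.val = k.val := by omega
        exact hl (by
          have := congrArg (fun n : ℕ => (n : ZMod c)) h2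
          simpa [ZMod.natCast_val, ZMod.cast_id] using this)
      have hne1 : ζ ^ (c - k.val + l.val) ≠ 1 := fun h => hne (hζ.pow_eq_one_iff_dvd _ |>.1 h)
      have hgeom : ∑ j ∈ Finset.range c, ζ ^ (j * (c - k.val + l.val)) = 0 := by
        have : ∀ j, ζ ^ (j * (c - k.val + l.val)) = (ζ ^ (c - k.val + l.val)) ^ j := by
          intro j; rw [← pow_mul, mul_comm]
        simp only [this]
        rw [geom_sum_eq hne1, ← pow_mul, mul_comm, pow_mul, hζc, one_pow, sub_self, zero_div]
      rw [hgeom, zero_smul]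
    · intro h; exact absurd (Finset.mem_univ k) h
  obtain ⟨M, hM⟩ := hTnil
  have hTM : T ^ (M + 1) = 0 := by rw [pow_succ, hM, zero_mul]
  rw [hT, smul_pow] at hTM
  have hc0 : ((c : ℂ)) ^ (M + 1) ≠ 0 := pow_ne_zero _ (Nat.cast_ne_zero.2 (NeZero.ne c))
  have h2 : (ι (DirectSum.decompose Agr x k : A)) ^ (M + 1) = 0 := by
    have h3 := congrArg (fun b => ((c : ℂ) ^ (M + 1))⁻¹ • b) hTM
    simp only [smul_smul, inv_mul_cancel₀ hc0, one_smul, smul_zero] at h3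
    exact h3
  refine ⟨M + 1, hι ?_⟩
  rw [map_pow, h2, map_zero]


/-- Let `A` be a finite-dimensional commutative unital ℝ-algebra with a
`ℤ/cℤ`-grading (`c ≥ 1`), and suppose the bilinear form `Q₀(a,b) = φ₀(ab)` on `A₀` is
positive definite for some linear form `φ₀` with `φ₀ 1 = 1`. Then for every `a ∈ A₁`,
the Jacobson radical of `A` is contained in the generalized `0`-eigenspace of
multiplication by `a`: every `x` in the radical satisfies `a ^ n * x = 0` for some `n`. -/
theorem jacobson_le_genZeroEigenspace_of_degree_one_element
    (c : ℕ) (hc : 1 ≤ c)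
    (A : Type*) [CommRing A] [Algebra ℝ A] [FiniteDimensional ℝ A]
    (Agr : ZMod c → Submodule ℝ A)
    (hinternal : DirectSum.IsInternal Agr)
    (hone : (1 : A) ∈ Agr 0)
    (hgrmul : ∀ (k l : ZMod c) (x y : A), x ∈ Agr k → y ∈ Agr l → x * y ∈ Agr (k + l))
    (φ0 : Agr 0 →ₗ[ℝ] ℝ)
    (hφ1 : φ0 ⟨1, hone⟩ = 1)
    (hpos : ∀ (x : A) (hx : x ∈ Agr 0), x ≠ 0 →
      0 < φ0 ⟨x * x, by simpa using hgrmul 0 0 x x hx hx⟩) :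
    ∀ a ∈ Agr 1, ∀ x ∈ Ideal.jacobson (⊥ : Ideal A), ∃ n : ℕ, a ^ n * x = 0 := by
  classical
  intro a ha x hxJ
  haveI : NeZero c := ⟨by omega⟩
  haveI : IsArtinianRing A := IsArtinianRing.of_finite ℝ A
  obtain ⟨N, hN⟩ := IsArtinianRing.isNilpotent_jacobson_bot (R := A)
  have hxnil : IsNilpotent x := by
    refine ⟨N, ?_⟩
    have h := Ideal.pow_mem_pow hxJ N
    rw [hN] at h
    simpa using h
  letI : DirectSum.Decomposition Agr := hinternal.chooseDecomposition
  -- powers of homogeneous elements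
  have hpowmem : ∀ (k : ZMod c) (u : A), u ∈ Agr k → ∀ m : ℕ, u ^ m ∈ Agr (m • k) := by
    intro k u hu m
    induction m with
    | zero => rw [pow_zero, zero_smul]; exact hone
    | succ m ih => rw [pow_succ, succ_nsmul]; exact hgrmul _ _ _ _ ih hu
  -- φ0 vanishes on the zero element
  have hzeroφ : ∀ (t : ↥(Agr 0)), (t : A) = 0 → φ0 t = 0 := by
    intro t ht
    have : t = 0 := Subtype.ext (by simpa using ht)
    rw [this, map_zero]
  -- nilpotent elements of degree 0 vanish
  have hA0 : ∀ (u : A), u ∈ Agr 0 → IsNilpotent u → u = 0 := by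
    have key : ∀ n : ℕ, ∀ u : A, u ∈ Agr 0 → u ^ n = 0 → u = 0 := by
      intro n
      induction n using Nat.strong_induction_on with
      | _ n ih =>
        intro u hu hn
        rcases Nat.lt_or_ge n 2 with h2 | h2
        · interval_cases n
          · have h1 : (1 : A) = 0 := by simpa using hn
            calc u = u * 1 := (mul_one u).symm
              _ = 0 := by rw [h1, mul_zero]
          · simpa using hn
        · set m := (n + 1) / 2 with hm
          have hmlt : m < n := by omega
          have ht2 : (u ^ m) * (u ^ m) = 0 := by
            rw [← pow_add]
            have h3 : m + m = n + (2 * m - n) := by omega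
            rw [h3, pow_add, hn, zero_mul]
          have htm : u ^ m ∈ Agr 0 := by
            have h4 := hpowmem 0 u hu m
            rwa [smul_zero] at h4
          have hz : u ^ m = 0 := by
            by_contra hne
            have hp := hpos (u ^ m) htm hne
            rw [hzeroφ _ ht2] at hp
            exact lt_irrefl 0 hp
          exact ih m hmlt u hu hz
    intro u hu ⟨n, hn⟩
    exact key n u hu hn
  -- powers of a
  have hamem : ∀ m : ℕ, a ^ m ∈ Agr (m : ZMod c) := by
    intro m
    have h1 := hpowmem 1 a ha m
    rwa [show (m • (1 : ZMod c)) = (m : ZMod c) by simp] at h1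
  -- each component is killed by a ^ c
  have hcomp : ∀ k : ZMod c, a ^ c * (DirectSum.decompose Agr x k : A) = 0 := by
    intro k
    have hxk : IsNilpotent ((DirectSum.decompose Agr x k : A)) :=
      aux_nilpotent_component c A Agr hgrmul hxnil k
    have hkv : k.val < c := ZMod.val_lt k
    have hmem : a ^ (c - k.val) * (DirectSum.decompose Agr x k : A) ∈ Agr 0 := by
      have h1 := hgrmul ((c - k.val : ℕ) : ZMod c) k (a ^ (c - k.val))
        (DirectSum.decompose Agr x k : A) (hamem (c - k.val))
        (DirectSum.decompose Agr x k).2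
      have h2 : (((c - k.val : ℕ) : ZMod c)) + k = 0 := by
        rw [Nat.cast_sub hkv.le, ZMod.natCast_self]
        simp [ZMod.natCast_val, ZMod.cast_id]
      rwa [h2] at h1
    have hnil2 : IsNilpotent (a ^ (c - k.val) * (DirectSum.decompose Agr x k : A)) := by
      obtain ⟨M, hM⟩ := hxk
      exact ⟨M, by rw [mul_pow, hM, mul_zero]⟩
    have hz : a ^ (c - k.val) * (DirectSum.decompose Agr x k : A) = 0 := hA0 _ hmem hnil2
    have hsplit : a ^ c = a ^ k.val * a ^ (c - k.val) := by
      rw [← pow_add]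
      congr 1
      omega
    rw [hsplit, mul_assoc, hz, mul_zero]
  refine ⟨c, ?_⟩
  have hdec : x = ∑ k : ZMod c, (DirectSum.decompose Agr x k : A) := by
    have h1 : ∑ k ∈ (DirectSum.decompose Agr x).support,
        ((DirectSum.decompose Agr x k : A)) = ∑ k : ZMod c,
        ((DirectSum.decompose Agr x k : A)) :=
      Finset.sum_subset (Finset.subset_univ _) (fun k _ hk => by
        rw [DFinsupp.notMem_support_iff.1 hk]; simp)
    rw [← h1, DirectSum.sum_support_decompose]
  rw [hdec, Finset.mul_sum]
  exact Finset.sum_eq_zero fun k _ => hcomp k
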